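/- Let a, b, c, h_xx, h_xy, γ, s, r'' be real numbers with b − c·γ ≠ 0, s > 0, P := (a − b·γ)·h_xx + (b − c·γ)·h_xy > 0, and r'' > h_xx²·s/P. Define v_xx := r'', v_xy := (h_xx·s − (a − b·γ)·r'')/(b − c·γ), and v_yy := (h_xy·s·(b − c·γ) − (a − b·γ)·h_xx·s + (a − b·γ)²·r'')/(b − c·γ)². Then v_xx > 0 and v_xx·v_yy − v_xy² > 0; equivalently, the symmetric 2×2 matrix [[v_xx, v_xy], [v_xy, v_yy]] is positive definite. -/

import Mathlib

theorem hessian_posdef_of_choice (a b c hxx hxy γ s r'' vxx vxy vyy : ℝ)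
    (hbc : b - c * γ ≠ 0) (hs : s > 0)
    (hP : (a - b * γ) * hxx + (b - c * γ) * hxy > 0)
    (hr : r'' > hxx ^ 2 * s / ((a - b * γ) * hxx + (b - c * γ) * hxy))
    (hvxx : vxx = r'')
    (hvxy : vxy = (hxx * s - (a - b * γ) * r'') / (b - c * γ))
    (hvyy : vyy = (hxy * s * (b - c * γ) - (a - b * γ) * hxx * s
        + (a - b * γ) ^ 2 * r'') / (b - c * γ) ^ 2) :
    vxx > 0 ∧ vxx * vyy - vxy ^ 2 > 0 ∧
      Matrix.PosDef !![vxx, vxy; vxy, vyy] := by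
  have hP' : (a - b * γ) * hxx + (b - c * γ) * hxy ≠ 0 := ne_of_gt hP
  have hb2 : (b - c * γ) ^ 2 > 0 := by positivity
  have hrP : r'' * ((a - b * γ) * hxx + (b - c * γ) * hxy) > hxx ^ 2 * s := by
    have := (div_lt_iff₀ hP).mp hr
    linarith
  have h1 : vxx > 0 := by
    have h0 : hxx ^ 2 * s / ((a - b * γ) * hxx + (b - c * γ) * hxy) ≥ 0 := by positivity
    linarith [hvxx ▸ hr]
  have h2 : vxx * vyy - vxy ^ 2 > 0 := by
    have key : vxx * vyy - vxy ^ 2 =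
        s * (r'' * ((a - b * γ) * hxx + (b - c * γ) * hxy) - hxx ^ 2 * s) / (b - c * γ) ^ 2 := by
      subst hvxx hvxy hvyy
      field_simp
      ring
    rw [key]
    have : r'' * ((a - b * γ) * hxx + (b - c * γ) * hxy) - hxx ^ 2 * s > 0 := by linarith
    positivity
  refine ⟨h1, h2, ?_, fun x hx => ?_⟩
  · show Matrix.conjTranspose !![vxx, vxy; vxy, vyy] = !![vxx, vxy; vxy, vyy]
    ext i j
    fin_cases i <;> fin_cases j <;> simp
  · have hq : (x.sum fun i xi => x.sum fun j xj => star xi * !![vxx, vxy; vxy, vyy] i j * xj) =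
        vxx * (x 0) ^ 2 + 2 * vxy * (x 0) * (x 1) + vyy * (x 1) ^ 2 := by
      simp [Finsupp.sum_fintype, Fin.sum_univ_two]
      ring
    rw [hq]
    have hx01 : x 0 ≠ 0 ∨ x 1 ≠ 0 := by
      by_contra h
      push_neg at h
      apply hx
      ext i; fin_cases i <;> simp [h.1, h.2]
    have expand : vxx * (vxx * (x 0) ^ 2 + 2 * vxy * (x 0) * (x 1) + vyy * (x 1) ^ 2) =
        (vxx * x 0 + vxy * x 1) ^ 2 + (vxx * vyy - vxy ^ 2) * (x 1) ^ 2 := by ring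
    rcases hx01 with h | h
    · rcases eq_or_ne (x 1) 0 with h1' | h1'
      · have : vxx * (x 0) ^ 2 > 0 := by positivity
        rw [h1']
        nlinarith [this]
      · have : (0:ℝ) < (x 1) ^ 2 := by positivity
        nlinarith [sq_nonneg (vxx * x 0 + vxy * x 1), this]
    · have : (0:ℝ) < (x 1) ^ 2 := by positivity
      nlinarith [sq_nonneg (vxx * x 0 + vxy * x 1), this]
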